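/- Let ν be a finite Borel measure on [0,τ], let 0 < m₁ ≤ m₂ < ∞ and L ≥ 0, and let s : [0,∞) × [0,τ] → [m₁, m₂] be measurable and satisfy |s(x,u) − s(x',u)| ≤ L|x − x'| for all x, x' ≥ 0 and u ∈ [0,τ]. Then there exists exactly one nondecreasing right-continuous function Γ : [0,τ] → [0,∞) with left limits (with Γ(0−) := 0) satisfying the Volterra integral equation Γ(t) = ∫_{[0,t]} ν(du) / s(Γ(u−), u) for all t ∈ [0,τ]; moreover Γ is bounded, with Γ(τ) ≤ ν([0,τ])/m₁. -/

import Mathlib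

open Set MeasureTheory

/-- A nondecreasing right-continuous function `Γ` on `[0,τ]` (extended to `ℝ`, with
`Γ = 0` to the left of `0`, so that `Γ(0−) = 0`) solving the Volterra integral
equation `Γ(t) = ∫_{[0,t]} ν(du) / s(Γ(u−), u)`. -/
def IsVolterraSolution (τ : ℝ) (ν : MeasureTheory.Measure ℝ) (s : ℝ → ℝ → ℝ)
    (Γ : ℝ → ℝ) : Prop :=
  Monotone Γ ∧ (∀ t < (0:ℝ), Γ t = 0) ∧
  (∀ t ∈ Set.Ico 0 τ, ContinuousWithinAt Γ (Set.Ici t) t) ∧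
  ∀ t ∈ Set.Icc 0 τ, Γ t = ∫ u in Set.Icc 0 t, (s (Function.leftLim Γ u) u)⁻¹ ∂ν

namespace Stmt17
open Filter Topology

structure Hyp (τ m₁ m₂ L : ℝ) (ν : Measure ℝ) (s : ℝ → ℝ → ℝ) : Prop where
  hτ : 0 ≤ τ
  hm₁ : 0 < m₁
  hm : m₁ ≤ m₂
  hL : 0 ≤ L
  hν : ν (Icc 0 τ)ᶜ = 0
  meas : Measurable (Function.uncurry s)
  range : ∀ x ∈ Ici (0:ℝ), ∀ u ∈ Icc 0 τ, s x u ∈ Icc m₁ m₂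
  lip : ∀ x ∈ Ici (0:ℝ), ∀ x' ∈ Ici (0:ℝ), ∀ u ∈ Icc 0 τ, |s x u - s x' u| ≤ L * |x - x'|

def Nice (ψ : ℝ → ℝ) : Prop := Monotone ψ ∧ ∀ t < (0:ℝ), ψ t = 0

noncomputable def Ff (ν : Measure ℝ) (s : ℝ → ℝ → ℝ) (ψ : ℝ → ℝ) (t : ℝ) : ℝ :=
  ∫ u in Icc 0 t, (s (Function.leftLim ψ u) u)⁻¹ ∂ν

variable {τ m₁ m₂ L : ℝ} {ν : Measure ℝ} {s : ℝ → ℝ → ℝ} {ψ ψ₁ ψ₂ : ℝ → ℝ}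

theorem Nice.nonneg (h : Nice ψ) (x : ℝ) : 0 ≤ ψ x := by
  rcases lt_or_ge x 0 with hx | hx
  · exact (h.2 x hx).ge
  · calc (0:ℝ) = ψ (-1) := (h.2 (-1) (by norm_num)).symm
      _ ≤ ψ x := h.1 (by linarith)

theorem Nice.leftLim_nonneg (h : Nice ψ) (u : ℝ) : 0 ≤ Function.leftLim ψ u :=
  le_trans (h.nonneg (u - 1)) (h.1.le_leftLim (by linarith))

theorem leftLim_congr (h₁ : Monotone ψ₁) (h₂ : Monotone ψ₂) {u : ℝ}
    (h : ∀ w < u, ψ₁ w = ψ₂ w) : Function.leftLim ψ₁ u = Function.leftLim ψ₂ u := by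
  have T1 := h₁.tendsto_leftLim u
  have T2 := h₂.tendsto_leftLim u
  have he : ψ₁ =ᶠ[𝓝[<] u] ψ₂ :=
    eventually_nhdsWithin_of_forall (fun w hw => h w hw)
  exact tendsto_nhds_unique (T1.congr' he) T2

theorem leftLim_dist (h₁ : Monotone ψ₁) (h₂ : Monotone ψ₂) {u d : ℝ}
    (h : ∀ w < u, |ψ₁ w - ψ₂ w| ≤ d) :
    |Function.leftLim ψ₁ u - Function.leftLim ψ₂ u| ≤ d := by
  have T := ((h₁.tendsto_leftLim u).sub (h₂.tendsto_leftLim u)).abs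
  exact le_of_tendsto T (eventually_nhdsWithin_of_forall (fun w hw => h w hw))

theorem Hyp.fmeas (H : Hyp τ m₁ m₂ L ν s) (h : Monotone ψ) :
    Measurable fun u => (s (Function.leftLim ψ u) u)⁻¹ := by
  have h1 : Measurable fun u : ℝ => (Function.leftLim ψ u, u) :=
    (h.leftLim.measurable).prodMk measurable_id
  exact (H.meas.comp h1).inv

theorem Hyp.ae_icc (H : Hyp τ m₁ m₂ L ν s) : ∀ᵐ u ∂ν, u ∈ Icc 0 τ := by
  have : {u : ℝ | ¬ u ∈ Icc 0 τ} = (Icc 0 τ)ᶜ := rfl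
  rw [ae_iff, this, H.hν]

theorem Hyp.ae_bound (H : Hyp τ m₁ m₂ L ν s) (hψ : Nice ψ) :
    ∀ᵐ u ∂ν, (s (Function.leftLim ψ u) u)⁻¹ ∈ Icc (0:ℝ) m₁⁻¹ := by
  filter_upwards [H.ae_icc] with u hu
  have hx : Function.leftLim ψ u ∈ Ici (0:ℝ) := hψ.leftLim_nonneg u
  have hr := H.range _ hx u hu
  constructor
  · exact inv_nonneg.2 (le_trans H.hm₁.le hr.1)
  · exact inv_anti₀ H.hm₁ hr.1

theorem Hyp.integrableOn (H : Hyp τ m₁ m₂ L ν s) [IsFiniteMeasure ν] (hψ : Nice ψ)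
    (A : Set ℝ) : IntegrableOn (fun u => (s (Function.leftLim ψ u) u)⁻¹) A ν := by
  refine Integrable.mono' (integrable_const m₁⁻¹)
    ((H.fmeas hψ.1).aestronglyMeasurable) ?_
  refine ae_restrict_of_ae ?_
  filter_upwards [H.ae_bound hψ] with u hu
  rw [Real.norm_eq_abs, abs_of_nonneg hu.1]
  exact hu.2



theorem Hyp.setIntegral_nonneg' (H : Hyp τ m₁ m₂ L ν s) (hψ : Nice ψ) (A : Set ℝ) :
    0 ≤ ∫ u in A, (s (Function.leftLim ψ u) u)⁻¹ ∂ν := by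
  refine integral_nonneg_of_ae (ae_restrict_of_ae ?_)
  filter_upwards [H.ae_bound hψ] with u hu using hu.1

theorem Hyp.setIntegral_le' (H : Hyp τ m₁ m₂ L ν s) [IsFiniteMeasure ν] (hψ : Nice ψ)
    (A : Set ℝ) :
    ∫ u in A, (s (Function.leftLim ψ u) u)⁻¹ ∂ν ≤ (ν A).toReal * m₁⁻¹ := by
  have h1 : ∫ u in A, (s (Function.leftLim ψ u) u)⁻¹ ∂ν ≤ ∫ _ in A, m₁⁻¹ ∂ν := by
    refine integral_mono_ae (H.integrableOn hψ A) (integrable_const _)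
      (ae_restrict_of_ae ?_)
    filter_upwards [H.ae_bound hψ] with u hu using hu.2
  simpa [setIntegral_const, smul_eq_mul, measureReal_def] using h1

theorem Hyp.Ff_nonneg (H : Hyp τ m₁ m₂ L ν s) (hψ : Nice ψ) (t : ℝ) :
    0 ≤ Ff ν s ψ t := H.setIntegral_nonneg' hψ _

theorem Hyp.Ff_le (H : Hyp τ m₁ m₂ L ν s) [IsFiniteMeasure ν] (hψ : Nice ψ) (t : ℝ) :
    Ff ν s ψ t ≤ (ν univ).toReal * m₁⁻¹ := by
  refine (H.setIntegral_le' hψ _).trans ?_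
  refine mul_le_mul_of_nonneg_right ?_ (inv_nonneg.2 H.hm₁.le)
  exact (ENNReal.toReal_le_toReal (measure_ne_top ν _) (measure_ne_top ν univ)).2
    (measure_mono (subset_univ _))

theorem Ff_neg {t : ℝ} (ht : t < 0) : Ff ν s ψ t = 0 := by
  rw [Ff, Icc_eq_empty (by linarith), Measure.restrict_empty, integral_zero_measure]

theorem Hyp.Ff_mono (H : Hyp τ m₁ m₂ L ν s) [IsFiniteMeasure ν] (hψ : Nice ψ) :
    Monotone (Ff ν s ψ) := by
  intro t₁ t₂ h
  refine setIntegral_mono_set (H.integrableOn hψ _) (ae_restrict_of_ae ?_)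
    (HasSubset.Subset.eventuallyLE (Icc_subset_Icc_right h))
  filter_upwards [H.ae_bound hψ] with u hu using hu.1

theorem Ff_congr (h₁ : Monotone ψ₁) (h₂ : Monotone ψ₂) {t : ℝ}
    (h : ∀ w < t, ψ₁ w = ψ₂ w) : Ff ν s ψ₁ t = Ff ν s ψ₂ t := by
  refine setIntegral_congr_fun measurableSet_Icc (fun u hu => ?_)
  rw [leftLim_congr h₁ h₂ (fun w hw => h w (lt_of_lt_of_le hw hu.2))]

theorem Hyp.Ff_sub_le (H : Hyp τ m₁ m₂ L ν s) [IsFiniteMeasure ν]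
    (h₁ : Nice ψ₁) (h₂ : Nice ψ₂) {c c' d t : ℝ}
    (hcut : ∀ w ≤ c, ψ₁ w = ψ₂ w) (hd : 0 ≤ d)
    (hD : ∀ v ∈ Ioo c c', |ψ₁ v - ψ₂ v| ≤ d) (ht : t ≤ c') :
    |Ff ν s ψ₁ t - Ff ν s ψ₂ t| ≤ L / (m₁ * m₁) * d * (ν (Ioc c t)).toReal := by
  set M := L / (m₁ * m₁) with hM
  have hM0 : 0 ≤ M := div_nonneg H.hL (mul_nonneg H.hm₁.le H.hm₁.le)
  set f₁ := fun u => (s (Function.leftLim ψ₁ u) u)⁻¹ with hf₁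
  set f₂ := fun u => (s (Function.leftLim ψ₂ u) u)⁻¹ with hf₂
  have hint₁ := H.integrableOn h₁ (Icc 0 t)
  have hint₂ := H.integrableOn h₂ (Icc 0 t)
  have e1 : Ff ν s ψ₁ t - Ff ν s ψ₂ t = ∫ u in Icc 0 t, (f₁ u - f₂ u) ∂ν :=
    (integral_sub hint₁ hint₂).symm
  rw [e1]
  have e2 : |∫ u in Icc 0 t, (f₁ u - f₂ u) ∂ν| ≤ ∫ u in Icc 0 t, |f₁ u - f₂ u| ∂ν := by
    simpa [Real.norm_eq_abs] using
      norm_integral_le_integral_norm (μ := ν.restrict (Icc 0 t)) (fun u => f₁ u - f₂ u)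
  refine e2.trans ?_
  have e3 : ∫ u in Icc 0 t, |f₁ u - f₂ u| ∂ν ≤
      ∫ u in Icc 0 t, (Ioc c t).indicator (fun _ => M * d) u ∂ν := by
    refine integral_mono_ae ((hint₁.sub hint₂).abs)
      ((integrable_const (M * d)).indicator measurableSet_Ioc) ?_
    have hmem : ∀ᵐ u ∂(ν.restrict (Icc 0 t)), u ∈ Icc 0 t :=
      ae_restrict_mem measurableSet_Icc
    filter_upwards [ae_restrict_of_ae H.ae_icc, hmem] with u hu hut
    rcases le_or_gt u c with hc | hc
    · have : Function.leftLim ψ₁ u = Function.leftLim ψ₂ u :=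
        leftLim_congr h₁.1 h₂.1 (fun w hw => hcut w (le_of_lt (lt_of_lt_of_le hw hc)))
      simp only [hf₁, hf₂, this, sub_self, abs_zero]
      exact indicator_nonneg (fun _ _ => mul_nonneg hM0 hd) u
    · have huIoc : u ∈ Ioc c t := ⟨hc, hut.2⟩
      rw [indicator_of_mem huIoc]
      have hll : |Function.leftLim ψ₁ u - Function.leftLim ψ₂ u| ≤ d := by
        refine leftLim_dist h₁.1 h₂.1 (fun w hw => ?_)
        rcases le_or_gt w c with hwc | hwc
        · rw [hcut w hwc, sub_self, abs_zero]; exact hd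
        · exact hD w ⟨hwc, lt_of_lt_of_le hw (hut.2.trans ht)⟩
      have hx₁ := h₁.leftLim_nonneg u
      have hx₂ := h₂.leftLim_nonneg u
      have hr₁ := H.range _ hx₁ u hu
      have hr₂ := H.range _ hx₂ u hu
      have ha0 : (0:ℝ) < s (Function.leftLim ψ₁ u) u := lt_of_lt_of_le H.hm₁ hr₁.1
      have hb0 : (0:ℝ) < s (Function.leftLim ψ₂ u) u := lt_of_lt_of_le H.hm₁ hr₂.1
      have e4 : f₁ u - f₂ u =
          (s (Function.leftLim ψ₂ u) u - s (Function.leftLim ψ₁ u) u) /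
            (s (Function.leftLim ψ₁ u) u * s (Function.leftLim ψ₂ u) u) := by
        rw [hf₁, hf₂]; rw [inv_sub_inv (ne_of_gt ha0) (ne_of_gt hb0)]
      rw [e4, abs_div]
      have hnum : |s (Function.leftLim ψ₂ u) u - s (Function.leftLim ψ₁ u) u| ≤ L * d := by
        refine (H.lip _ hx₂ _ hx₁ u hu).trans ?_
        refine mul_le_mul_of_nonneg_left ?_ H.hL
        rw [abs_sub_comm]; exact hll
      have hden : m₁ * m₁ ≤ |s (Function.leftLim ψ₁ u) u * s (Function.leftLim ψ₂ u) u| := by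
        rw [abs_of_pos (mul_pos ha0 hb0)]
        exact mul_le_mul hr₁.1 hr₂.1 H.hm₁.le (le_trans H.hm₁.le hr₁.1)
      have : |s (Function.leftLim ψ₂ u) u - s (Function.leftLim ψ₁ u) u| /
          |s (Function.leftLim ψ₁ u) u * s (Function.leftLim ψ₂ u) u| ≤
          (L * d) / (m₁ * m₁) :=
        div_le_div₀ (mul_nonneg H.hL hd) hnum (mul_pos H.hm₁ H.hm₁) hden
      refine this.trans (le_of_eq ?_)
      rw [hM]; ring
  refine e3.trans ?_
  rw [setIntegral_indicator measurableSet_Ioc, setIntegral_const, smul_eq_mul]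
  have : (ν (Icc 0 t ∩ Ioc c t)).toReal ≤ (ν (Ioc c t)).toReal :=
    (ENNReal.toReal_le_toReal (measure_ne_top ν _) (measure_ne_top ν _)).2
      (measure_mono inter_subset_right)
  calc (ν (Icc 0 t ∩ Ioc c t)).toReal * (M * d)
      ≤ (ν (Ioc c t)).toReal * (M * d) :=
        mul_le_mul_of_nonneg_right this (mul_nonneg hM0 hd)
    _ = M * d * (ν (Ioc c t)).toReal := by ring



theorem exists_small (ν : Measure ℝ) [IsFiniteMeasure ν] (c : ℝ) {ε : ℝ} (hε : 0 < ε) :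
    ∃ η > 0, (ν (Ioo c (c + η))).toReal < ε := by
  have hmono : Antitone (fun n : ℕ => Ioo c (c + 1 / (n + 1))) := by
    intro n m hnm
    refine Ioo_subset_Ioo_right (add_le_add_right ?_ c)
    exact one_div_le_one_div_of_le (by positivity) (by exact_mod_cast add_le_add_left (Nat.cast_le.2 hnm) 1)
  have hiner : ⋂ n : ℕ, Ioo c (c + 1 / (n + 1)) = ∅ := by
    ext x
    simp only [mem_iInter, mem_Ioo, mem_empty_iff_false, iff_false, not_forall]
    by_contra hx
    push_neg at hx
    have hx' := hx
    obtain ⟨n, hn⟩ := exists_nat_one_div_lt (sub_pos.2 (hx 0).1)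
    exact absurd ((hx n).2) (by push_neg; linarith [hn])
  have h0 : Tendsto (fun n : ℕ => ν (Ioo c (c + 1 / (n + 1)))) atTop (𝓝 0) := by
    have := tendsto_measure_iInter_atTop (μ := ν)
      (fun n : ℕ => (measurableSet_Ioo).nullMeasurableSet) hmono ⟨0, measure_ne_top ν _⟩
    rwa [hiner, measure_empty] at this
  have h1 : Tendsto (fun n : ℕ => (ν (Ioo c (c + 1 / (n + 1)))).toReal) atTop (𝓝 0) := by
    have := (ENNReal.tendsto_toReal (by simp : (0:ENNReal) ≠ ⊤)).comp h0
    exact this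
  have h2 : ∀ᶠ n : ℕ in atTop, (ν (Ioo c (c + 1 / (n + 1)))).toReal < ε :=
    h1.eventually (Filter.Tendsto.eventually_lt_const hε tendsto_id) |>.mono (fun n hn => hn)
  obtain ⟨n, hn⟩ := h2.exists
  exact ⟨1 / (n + 1), by positivity, hn⟩


theorem Hyp.Ff_rc (H : Hyp τ m₁ m₂ L ν s) [IsFiniteMeasure ν] (hψ : Nice ψ) {t : ℝ}
    (ht : 0 ≤ t) : ContinuousWithinAt (Ff ν s ψ) (Ici t) t := by
  rw [Metric.continuousWithinAt_iff]
  intro ε hε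
  have hε' : 0 < ε * m₁ := mul_pos hε H.hm₁
  obtain ⟨η, hη, hsm⟩ : ∃ η > 0, (ν (Ioc t (t + η))).toReal < ε * m₁ := by
    obtain ⟨η, hη, hsm⟩ : ∃ η > 0, (ν (Ioo t (t + η))).toReal < ε * m₁ :=
      exists_small ν t hε'
    refine ⟨η / 2, by linarith, lt_of_le_of_lt ?_ hsm⟩
    refine (ENNReal.toReal_le_toReal (measure_ne_top ν _) (measure_ne_top ν _)).2
      (measure_mono (fun x hx => ⟨hx.1, by have h2 : x ≤ t + η/2 := hx.2; linarith⟩))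
  refine ⟨η, hη, fun {x} hx hdist => ?_⟩
  have hxt : t ≤ x := hx
  have hxlt : x < t + η := by
    rw [Real.dist_eq, abs_of_nonneg (by linarith)] at hdist; linarith
  have hsplit : Icc 0 x = Icc 0 t ∪ Ioc t x := (Icc_union_Ioc_eq_Icc ht hxt).symm
  have hdisj : Disjoint (Icc (0:ℝ) t) (Ioc t x) := by
    refine disjoint_left.2 fun a ha1 ha2 => ?_
    exact absurd ha1.2 (not_le.2 ha2.1)
  have hFx : Ff ν s ψ x = Ff ν s ψ t + ∫ u in Ioc t x, (s (Function.leftLim ψ u) u)⁻¹ ∂ν := by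
    rw [Ff, hsplit, setIntegral_union hdisj measurableSet_Ioc
      (H.integrableOn hψ _) (H.integrableOn hψ _)]
    rfl
  have hnn := H.setIntegral_nonneg' hψ (Ioc t x)
  have hle : ∫ u in Ioc t x, (s (Function.leftLim ψ u) u)⁻¹ ∂ν ≤ (ν (Ioc t x)).toReal * m₁⁻¹ :=
    H.setIntegral_le' hψ _
  have hmeas : (ν (Ioc t x)).toReal ≤ (ν (Ioc t (t + η))).toReal :=
    (ENNReal.toReal_le_toReal (measure_ne_top ν _) (measure_ne_top ν _)).2
      (measure_mono (Ioc_subset_Ioc_right hxlt.le))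
  rw [Real.dist_eq, hFx, add_sub_cancel_left, abs_of_nonneg hnn]
  calc ∫ u in Ioc t x, (s (Function.leftLim ψ u) u)⁻¹ ∂ν
      ≤ (ν (Ioc t (t + η))).toReal * m₁⁻¹ :=
        hle.trans (mul_le_mul_of_nonneg_right hmeas (inv_nonneg.2 H.hm₁.le))
    _ < (ε * m₁) * m₁⁻¹ := by
        refine mul_lt_mul_of_pos_right hsm (inv_pos.2 H.hm₁)
    _ = ε := mul_inv_cancel_right₀ (ne_of_gt H.hm₁) ε

/-- A partial solution up to level `b`, extended constantly beyond `b`. -/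
def Sol (ν : Measure ℝ) (s : ℝ → ℝ → ℝ) (b : ℝ) (Γ : ℝ → ℝ) : Prop :=
  Nice Γ ∧ (∀ t ∈ Icc 0 b, Γ t = Ff ν s Γ t) ∧ ∀ t, b ≤ t → Γ t = Γ b

theorem Hyp.sol_eq_b (H : Hyp τ m₁ m₂ L ν s) {b : ℝ} {Γ : ℝ → ℝ} (hΓ : Sol ν s b Γ)
    {ψ : ℝ → ℝ} (hψm : Monotone ψ) (hψe : ∀ w < b, ψ w = Γ w) : Ff ν s ψ b = Γ b := by
  rcases le_or_gt 0 b with hb | hb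
  · rw [Ff_congr hψm hΓ.1.1 hψe]
    exact (hΓ.2.1 b ⟨hb, le_rfl⟩).symm
  · rw [Ff_neg hb, hΓ.1.2 b hb]

theorem Hyp.sol_bound (H : Hyp τ m₁ m₂ L ν s) [IsFiniteMeasure ν] {b : ℝ} {Γ : ℝ → ℝ}
    (hΓ : Sol ν s b Γ) (t : ℝ) : Γ t ≤ (ν univ).toReal * m₁⁻¹ := by
  have h1 : Γ t ≤ Γ (max t b) := hΓ.1.1 (le_max_left _ _)
  have h2 : Γ (max t b) = Γ b := hΓ.2.2 _ (le_max_right _ _)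
  rcases le_or_gt 0 b with hb | hb
  · rw [h2, hΓ.2.1 b ⟨hb, le_rfl⟩] at h1
    exact h1.trans (H.Ff_le hΓ.1 b)
  · rw [h2, hΓ.1.2 b hb] at h1
    exact h1.trans (mul_nonneg ENNReal.toReal_nonneg (inv_nonneg.2 H.hm₁.le))

theorem Hyp.sol_restrict (H : Hyp τ m₁ m₂ L ν s) {b b' : ℝ} (hbb : b ≤ b') {Γ : ℝ → ℝ}
    (hΓ : Sol ν s b' Γ) : Sol ν s b (fun t => Γ (min t b)) := by
  refine ⟨⟨fun t₁ t₂ h => hΓ.1.1 (min_le_min_right b h), fun t htneg => ?_⟩, fun t htb => ?_, fun t htb => ?_⟩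
  · show Γ (min t b) = 0
    rcases le_or_gt t b with h | h
    · rw [min_eq_left h]; exact hΓ.1.2 t htneg
    · rw [min_eq_right h.le]; exact hΓ.1.2 b (h.trans htneg)
  · show Γ (min t b) = Ff ν s (fun t => Γ (min t b)) t
    have h1 : min t b = t := min_eq_left htb.2
    rw [h1]
    have h2 : Γ t = Ff ν s Γ t := hΓ.2.1 t ⟨htb.1, htb.2.trans hbb⟩
    rw [h2]
    refine Ff_congr hΓ.1.1 (fun t₁ t₂ h => hΓ.1.1 (min_le_min_right b h)) (fun w hw => ?_)
    rw [min_eq_left (le_of_lt (lt_of_lt_of_le hw htb.2))]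
  · show Γ (min t b) = Γ (min b b)
    rw [min_eq_right htb, min_self]

theorem Hyp.eq_on (H : Hyp τ m₁ m₂ L ν s) [IsFiniteMeasure ν] {b : ℝ}
    {Γ₁ Γ₂ : ℝ → ℝ} (h₁ : Nice Γ₁) (e₁ : ∀ t ∈ Icc 0 b, Γ₁ t = Ff ν s Γ₁ t)
    (h₂ : Nice Γ₂) (e₂ : ∀ t ∈ Icc 0 b, Γ₂ t = Ff ν s Γ₂ t) :
    ∀ t ≤ b, Γ₁ t = Γ₂ t := by
  rcases lt_or_ge b 0 with hbneg | hb
  · intro t ht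
    rw [h₁.2 t (lt_of_le_of_lt ht hbneg), h₂.2 t (lt_of_le_of_lt ht hbneg)]
  set M := L / (m₁ * m₁) with hM
  have hM0 : 0 ≤ M := div_nonneg H.hL (mul_nonneg H.hm₁.le H.hm₁.le)
  set E := {x : ℝ | x ∈ Icc (-1 : ℝ) b ∧ ∀ u ≤ x, Γ₁ u = Γ₂ u} with hE
  have hE1 : (-1 : ℝ) ∈ E := ⟨⟨le_rfl, by linarith⟩, fun u hu => by
      rw [h₁.2 u (by linarith), h₂.2 u (by linarith)]⟩
  have hEne : E.Nonempty := ⟨-1, hE1⟩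
  have hEbdd : BddAbove E := ⟨b, fun x hx => hx.1.2⟩
  set c := sSup E with hc
  have hcmem_le : c ≤ b := csSup_le hEne (fun x hx => hx.1.2)
  have hcge : (-1:ℝ) ≤ c := le_csSup hEbdd hE1
  have hlt : ∀ u < c, Γ₁ u = Γ₂ u := by
    intro u hu
    obtain ⟨x, hxE, hux⟩ := exists_lt_of_lt_csSup hEne hu
    exact hxE.2 u hux.le
  have hcE : ∀ u ≤ c, Γ₁ u = Γ₂ u := by
    intro u hu
    rcases lt_or_eq_of_le hu with hu' | heq
    · exact hlt u hu'
    · rcases lt_or_ge u 0 with hu0 | hu0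
      · rw [h₁.2 u hu0, h₂.2 u hu0]
      · rw [e₁ u ⟨hu0, hu.trans hcmem_le⟩, e₂ u ⟨hu0, hu.trans hcmem_le⟩,
          Ff_congr h₁.1 h₂.1 (fun w hw => hlt w (heq ▸ hw))]
  by_cases hcb : c = b
  · intro t ht; exact hcE t (le_of_le_of_eq ht hcb.symm)
  have hclt : c < b := lt_of_le_of_ne hcmem_le hcb
  exfalso
  obtain ⟨η, hη, hsmall⟩ : ∃ η > 0, M * (ν (Ioo c (c + η))).toReal < 1 := by
    obtain ⟨η, hη, h'⟩ := exists_small ν c (show (0:ℝ) < (M + 1)⁻¹ by positivity)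
    refine ⟨η, hη, ?_⟩
    calc M * (ν (Ioo c (c + η))).toReal ≤ (M+1) * (ν (Ioo c (c + η))).toReal :=
          mul_le_mul_of_nonneg_right (by linarith) ENNReal.toReal_nonneg
      _ < (M+1) * (M+1)⁻¹ := mul_lt_mul_of_pos_left h' (by positivity)
      _ = 1 := mul_inv_cancel₀ (by positivity)
  set q := M * (ν (Ioo c (c + η))).toReal with hq
  have hq0 : 0 ≤ q := mul_nonneg hM0 ENNReal.toReal_nonneg
  set c' := min b (c + η) with hc'
  have hcc' : c < c' := lt_min hclt (by linarith)
  have hc'b : c' ≤ b := min_le_left _ _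
  have hc'η : c' ≤ c + η := min_le_right _ _
  set D := sSup ((fun v => |Γ₁ v - Γ₂ v|) '' Ioo c c') with hD
  have hneIoo : (Ioo c c').Nonempty := nonempty_Ioo.2 hcc'
  have hneD : ((fun v => |Γ₁ v - Γ₂ v|) '' Ioo c c').Nonempty := hneIoo.image _
  have hbddD : BddAbove ((fun v => |Γ₁ v - Γ₂ v|) '' Ioo c c') := by
    refine ⟨Γ₁ b + Γ₂ b, ?_⟩
    rintro y ⟨v, hv, rfl⟩
    have hn1 := h₁.nonneg v
    have hn2 := h₂.nonneg v
    have hm1 : Γ₁ v ≤ Γ₁ b := h₁.1 (hv.2.le.trans hc'b)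
    have hm2 : Γ₂ v ≤ Γ₂ b := h₂.1 (hv.2.le.trans hc'b)
    rw [abs_sub_le_iff]; constructor <;> linarith
  have hD0 : 0 ≤ D := by
    obtain ⟨v₀, hv₀⟩ := hneIoo
    exact le_trans (abs_nonneg _) (le_csSup hbddD ⟨v₀, hv₀, rfl⟩)
  have hstep : ∀ v ∈ Ioo c c', |Γ₁ v - Γ₂ v| ≤ q * D := by
    intro v hv
    rcases lt_or_ge v 0 with hv0 | hv0
    · rw [h₁.2 v hv0, h₂.2 v hv0, sub_self, abs_zero]; exact mul_nonneg hq0 hD0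
    · rw [e₁ v ⟨hv0, hv.2.le.trans hc'b⟩, e₂ v ⟨hv0, hv.2.le.trans hc'b⟩]
      have key := H.Ff_sub_le h₁ h₂ (c := c) (c' := c') (d := D)
        hcE hD0 (fun w hw => le_csSup hbddD ⟨w, hw, rfl⟩) hv.2.le
      refine key.trans ?_
      have hsub : (ν (Ioc c v)).toReal ≤ (ν (Ioo c (c + η))).toReal := by
        refine (ENNReal.toReal_le_toReal (measure_ne_top ν _) (measure_ne_top ν _)).2
          (measure_mono (fun x hx => ⟨hx.1, lt_of_le_of_lt hx.2 (lt_of_lt_of_le hv.2 hc'η)⟩))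
      calc L / (m₁ * m₁) * D * (ν (Ioc c v)).toReal = M * D * (ν (Ioc c v)).toReal := by
            rw [hM]
        _ ≤ M * D * (ν (Ioo c (c + η))).toReal :=
            mul_le_mul_of_nonneg_left hsub (mul_nonneg hM0 hD0)
        _ = q * D := by rw [hq]; ring
  have hDle : D ≤ q * D := csSup_le hneD (by rintro y ⟨v, hv, rfl⟩; exact hstep v hv)
  have hDeq : D = 0 := by
    refine le_antisymm ?_ hD0
    by_contra hpos
    push_neg at hpos
    have : q * D < D := mul_lt_of_lt_one_left hpos hsmall
    linarith
  have hzero : ∀ v ∈ Ioo c c', Γ₁ v = Γ₂ v := by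
    intro v hv
    have := hstep v hv
    rw [hDeq, mul_zero] at this
    exact sub_eq_zero.1 (abs_eq_zero.1 (le_antisymm this (abs_nonneg _)))
  have hc'E : c' ∈ E := by
    refine ⟨⟨by linarith, hc'b⟩, fun u hu => ?_⟩
    rcases le_or_gt u c with huc | huc
    · exact hcE u huc
    rcases lt_or_ge u c' with hult | hueq
    · exact hzero u ⟨huc, hult⟩
    have huc' : u = c' := le_antisymm hu hueq
    rw [huc']
    rcases lt_or_ge c' 0 with h0 | h0
    · rw [h₁.2 c' h0, h₂.2 c' h0]
    · rw [e₁ c' ⟨h0, hc'b⟩, e₂ c' ⟨h0, hc'b⟩]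
      have key := H.Ff_sub_le h₁ h₂ (c := c) (c' := c') (d := 0)
        hcE le_rfl (fun w hw => by rw [hzero w hw, sub_self, abs_zero]) le_rfl
      simp only [mul_zero, zero_mul] at key
      exact sub_eq_zero.1 (abs_eq_zero.1 (le_antisymm key (abs_nonneg _)))
  have : c' ≤ c := le_csSup hEbdd hc'E
  linarith

theorem Hyp.sol_unique (H : Hyp τ m₁ m₂ L ν s) [IsFiniteMeasure ν] {b : ℝ}
    {Γ₁ Γ₂ : ℝ → ℝ} (s₁ : Sol ν s b Γ₁) (s₂ : Sol ν s b Γ₂) : Γ₁ = Γ₂ := by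
  have h := H.eq_on s₁.1 s₁.2.1 s₂.1 s₂.2.1
  funext t
  rcases le_or_gt t b with ht | ht
  · exact h t ht
  · rw [s₁.2.2 t ht.le, s₂.2.2 t ht.le, h b le_rfl]

noncomputable def picard (ν : Measure ℝ) (s : ℝ → ℝ → ℝ) (Γ : ℝ → ℝ) (b b' : ℝ) :
    ℕ → ℝ → ℝ
  | 0 => fun t => Γ (min t b)
  | k + 1 => fun t => if t ≤ b then Γ t else Ff ν s (picard ν s Γ b b' k) (min t b')

theorem picard_succ_le {ν : Measure ℝ} {s : ℝ → ℝ → ℝ} {Γ : ℝ → ℝ} {b b' t : ℝ} {k : ℕ}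
    (h : t ≤ b) : picard ν s Γ b b' (k + 1) t = Γ t := by simp [picard, h]

theorem picard_succ_gt {ν : Measure ℝ} {s : ℝ → ℝ → ℝ} {Γ : ℝ → ℝ} {b b' t : ℝ} {k : ℕ}
    (h : ¬ t ≤ b) :
    picard ν s Γ b b' (k + 1) t = Ff ν s (picard ν s Γ b b' k) (min t b') := by
  simp [picard, h]

theorem Hyp.sol_extend (H : Hyp τ m₁ m₂ L ν s) [IsFiniteMeasure ν] {b : ℝ}
    {Γ : ℝ → ℝ} (hΓ : Sol ν s b Γ) (hbτ : b < τ) :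
    ∃ b', b < b' ∧ b' ≤ τ ∧ ∃ Φ : ℝ → ℝ, Sol ν s b' Φ := by
  have hM0 : 0 ≤ L / (m₁ * m₁) := div_nonneg H.hL (mul_nonneg H.hm₁.le H.hm₁.le)
  set M := L / (m₁ * m₁) with hM
  set Cb := (ν univ).toReal * m₁⁻¹ with hCb
  have hCb0 : 0 ≤ Cb := mul_nonneg ENNReal.toReal_nonneg (inv_nonneg.2 H.hm₁.le)
  obtain ⟨η, hη, hq1⟩ : ∃ η > 0, M * (ν (Ioo b (b + η))).toReal < 1 := by
    obtain ⟨η, hη, h'⟩ := exists_small ν b (show (0:ℝ) < (M + 1)⁻¹ by positivity)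
    refine ⟨η, hη, ?_⟩
    calc M * (ν (Ioo b (b + η))).toReal ≤ (M+1) * (ν (Ioo b (b + η))).toReal :=
          mul_le_mul_of_nonneg_right (by linarith) ENNReal.toReal_nonneg
      _ < (M+1) * (M+1)⁻¹ := mul_lt_mul_of_pos_left h' (by positivity)
      _ = 1 := mul_inv_cancel₀ (by positivity)
  set q := M * (ν (Ioo b (b + η))).toReal with hq
  have hq0 : 0 ≤ q := mul_nonneg hM0 ENNReal.toReal_nonneg
  set b' := min τ (b + η) with hb'
  have hbb' : b < b' := lt_min hbτ (by linarith)
  have hb'τ : b' ≤ τ := min_le_left _ _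
  have hb'η : b' ≤ b + η := min_le_right _ _
  refine ⟨b', hbb', hb'τ, ?_⟩
  set p := picard ν s Γ b b' with hp
  have hinv : ∀ k, Nice (p k) ∧ (∀ t, t ≤ b → p k t = Γ t) ∧ (∀ t, p k t ≤ Cb) := by
    intro k
    induction k with
    | zero =>
      refine ⟨⟨hΓ.1.1.comp (monotone_id.min monotone_const), fun t ht => ?_⟩,
        fun t ht => ?_, fun t => ?_⟩
      · exact hΓ.1.2 _ (lt_of_le_of_lt (min_le_left t b) ht)
      · show Γ (min t b) = Γ t; rw [min_eq_left ht]
      · exact H.sol_bound hΓ _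
    | succ k IH =>
      obtain ⟨hNk, hEk, hBk⟩ := IH
      have hjb : Ff ν s (p k) b = Γ b :=
        H.sol_eq_b hΓ hNk.1 (fun w hw => hEk w hw.le)
      have hmono : Monotone (p (k+1)) := by
        intro t₁ t₂ h
        rcases le_or_gt t₂ b with h2 | h2
        · rw [show p (k+1) t₁ = Γ t₁ from picard_succ_le (h.trans h2),
            show p (k+1) t₂ = Γ t₂ from picard_succ_le h2]
          exact hΓ.1.1 h
        · rw [show p (k+1) t₂ = Ff ν s (p k) (min t₂ b') from picard_succ_gt (not_le.2 h2)]
          rcases le_or_gt t₁ b with h1 | h1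
          · rw [show p (k+1) t₁ = Γ t₁ from picard_succ_le h1]
            calc Γ t₁ ≤ Γ b := hΓ.1.1 h1
              _ = Ff ν s (p k) b := hjb.symm
              _ ≤ Ff ν s (p k) (min t₂ b') := H.Ff_mono hNk (le_min h2.le hbb'.le)
          · rw [show p (k+1) t₁ = Ff ν s (p k) (min t₁ b') from picard_succ_gt (not_le.2 h1)]
            exact H.Ff_mono hNk (min_le_min_right b' h)
      refine ⟨⟨hmono, fun t ht => ?_⟩, fun t ht => picard_succ_le ht, fun t => ?_⟩
      · rcases le_or_gt t b with h1 | h1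
        · rw [show p (k+1) t = Γ t from picard_succ_le h1]; exact hΓ.1.2 t ht
        · rw [show p (k+1) t = Ff ν s (p k) (min t b') from picard_succ_gt (not_le.2 h1)]
          exact Ff_neg (lt_of_le_of_lt (min_le_left t b') ht)
      · rcases le_or_gt t b with h1 | h1
        · rw [show p (k+1) t = Γ t from picard_succ_le h1]; exact H.sol_bound hΓ t
        · rw [show p (k+1) t = Ff ν s (p k) (min t b') from picard_succ_gt (not_le.2 h1)]
          exact H.Ff_le hNk _
  have hnn : ∀ k t, 0 ≤ p k t := fun k t => (hinv k).1.nonneg t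
  set D := fun k => sSup ((fun v => |p (k+1) v - p k v|) '' Ioo b b') with hDdef
  have hneIoo : (Ioo b b').Nonempty := nonempty_Ioo.2 hbb'
  have hbddD : ∀ k, BddAbove ((fun v => |p (k+1) v - p k v|) '' Ioo b b') := by
    intro k
    refine ⟨Cb, ?_⟩
    rintro y ⟨v, hv, rfl⟩
    have h1 := hnn (k+1) v; have h2 := hnn k v
    have h3 := (hinv (k+1)).2.2 v; have h4 := (hinv k).2.2 v
    rw [abs_sub_le_iff]; constructor <;> linarith
  have hD0 : ∀ k, 0 ≤ D k := by
    intro k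
    obtain ⟨v₀, hv₀⟩ := hneIoo
    exact le_trans (abs_nonneg _) (le_csSup (hbddD k) ⟨v₀, hv₀, rfl⟩)
  have hcut : ∀ k j, ∀ w ≤ b, p k w = p j w := fun k j w hw => by
    rw [(hinv k).2.1 w hw, (hinv j).2.1 w hw]
  have hkey : ∀ k t, t ≤ b' →
      |Ff ν s (p (k+1)) t - Ff ν s (p k) t| ≤ M * D k * (ν (Ioc b t)).toReal := by
    intro k t ht
    have h1 := H.Ff_sub_le (hinv (k+1)).1 (hinv k).1 (c := b) (c' := b') (d := D k)
      (hcut (k+1) k) (hD0 k) (fun w hw => le_csSup (hbddD k) ⟨w, hw, rfl⟩) ht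
    rwa [← hM] at h1
  have hstepD : ∀ k, D (k+1) ≤ q * D k := by
    intro k
    refine csSup_le (hneIoo.image _) ?_
    rintro y ⟨v, hv, rfl⟩
    have hvb : ¬ v ≤ b := not_le.2 hv.1
    have hmin : min v b' = v := min_eq_left hv.2.le
    show |p (k+1+1) v - p (k+1) v| ≤ q * D k
    rw [show p (k+1+1) v = Ff ν s (p (k+1)) (min v b') from picard_succ_gt hvb,
      show p (k+1) v = Ff ν s (p k) (min v b') from picard_succ_gt hvb, hmin]
    refine (hkey k v hv.2.le).trans ?_
    have hsub : (ν (Ioc b v)).toReal ≤ (ν (Ioo b (b + η))).toReal :=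
      (ENNReal.toReal_le_toReal (measure_ne_top ν _) (measure_ne_top ν _)).2
        (measure_mono (fun x hx => ⟨hx.1, lt_of_le_of_lt hx.2 (lt_of_lt_of_le hv.2 hb'η)⟩))
    calc M * D k * (ν (Ioc b v)).toReal ≤ M * D k * (ν (Ioo b (b + η))).toReal :=
          mul_le_mul_of_nonneg_left hsub (mul_nonneg hM0 (hD0 k))
      _ = q * D k := by rw [hq]; ring
  have hDgeo : ∀ k, D k ≤ D 0 * q ^ k := by
    intro k
    induction k with
    | zero => simp
    | succ k IH =>
      calc D (k+1) ≤ q * D k := hstepD k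
        _ ≤ q * (D 0 * q ^ k) := mul_le_mul_of_nonneg_left IH hq0
        _ = D 0 * q ^ (k+1) := by ring
  set K := M * (ν univ).toReal * D 0 with hK
  have hK0 : 0 ≤ K := mul_nonneg (mul_nonneg hM0 ENNReal.toReal_nonneg) (hD0 0)
  have hglob : ∀ k t, |p (k+2) t - p (k+1) t| ≤ K * q ^ k := by
    intro k t
    rcases le_or_gt t b with h1 | h1
    · rw [show p (k+2) t = Γ t from picard_succ_le h1,
        show p (k+1) t = Γ t from picard_succ_le h1, sub_self, abs_zero]
      positivity
    · rw [show p (k+2) t = Ff ν s (p (k+1)) (min t b') from picard_succ_gt (not_le.2 h1),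
        show p (k+1) t = Ff ν s (p k) (min t b') from picard_succ_gt (not_le.2 h1)]
      refine (hkey k (min t b') (min_le_right _ _)).trans ?_
      have h2 : (ν (Ioc b (min t b'))).toReal ≤ (ν univ).toReal :=
        (ENNReal.toReal_le_toReal (measure_ne_top ν _) (measure_ne_top ν _)).2
          (measure_mono (subset_univ _))
      calc M * D k * (ν (Ioc b (min t b'))).toReal
          ≤ M * D k * (ν univ).toReal :=
            mul_le_mul_of_nonneg_left h2 (mul_nonneg hM0 (hD0 _))
        _ ≤ M * (D 0 * q ^ k) * (ν univ).toReal := by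
            nlinarith [mul_nonneg (mul_nonneg hM0 (ENNReal.toReal_nonneg (a := ν univ)))
              (sub_nonneg.2 (hDgeo k))]
        _ = K * q ^ k := by rw [hK]; ring
  have hcau : ∀ t : ℝ, ∃ l, Tendsto (fun k => p (k+1) t) atTop (𝓝 l) := by
    intro t
    have hcs : CauchySeq (fun k => p (k+1) t) := by
      refine cauchySeq_of_le_geometric q K hq1 (fun n => ?_)
      rw [Real.dist_eq, abs_sub_comm]
      exact hglob n t
    exact cauchySeq_tendsto_of_complete hcs
  set Φ : ℝ → ℝ := fun t => (hcau t).choose with hΦdef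
  have hΦ : ∀ t, Tendsto (fun k => p (k+1) t) atTop (𝓝 (Φ t)) := fun t => (hcau t).choose_spec
  have hΦ' : ∀ t, Tendsto (fun k => p k t) atTop (𝓝 (Φ t)) := fun t =>
    (tendsto_add_atTop_iff_nat 1).1 (hΦ t)
  have hU : ∀ k t, |p (k+1) t - Φ t| ≤ K * q ^ k / (1 - q) := by
    intro k t
    have h1 := dist_le_of_le_geometric_of_tendsto q K hq1
      (fun n => by rw [Real.dist_eq, abs_sub_comm]; exact hglob n t) (hΦ t) k
    rwa [Real.dist_eq] at h1
  have hΦnice : Nice Φ := by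
    constructor
    · intro t₁ t₂ h
      exact le_of_tendsto_of_tendsto' (hΦ' t₁) (hΦ' t₂) (fun k => (hinv k).1.1 h)
    · intro t ht
      have h0 : Tendsto (fun k : ℕ => p k t) atTop (𝓝 0) := by
        have he : (fun k : ℕ => p k t) = fun _ => (0:ℝ) :=
          funext fun k => (hinv k).1.2 t ht
        rw [he]; exact tendsto_const_nhds
      exact tendsto_nhds_unique (hΦ' t) h0
  have hΦeq : ∀ t, t ≤ b → Φ t = Γ t := by
    intro t ht
    have h0 : Tendsto (fun k : ℕ => p k t) atTop (𝓝 (Γ t)) := by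
      have he : (fun k : ℕ => p k t) = fun _ => Γ t := funext fun k => (hinv k).2.1 t ht
      rw [he]; exact tendsto_const_nhds
    exact tendsto_nhds_unique (hΦ' t) h0
  have hq1' : (0:ℝ) < 1 - q := by linarith
  have hFfconv : ∀ t, Tendsto (fun k => Ff ν s (p (k+1)) t) atTop (𝓝 (Ff ν s Φ t)) := by
    intro t
    rw [tendsto_iff_dist_tendsto_zero]
    have hb1 : ∀ k, dist (Ff ν s (p (k+1)) t) (Ff ν s Φ t) ≤
        M * (K * q ^ k / (1 - q)) * (ν univ).toReal := by
      intro k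
      rw [Real.dist_eq]
      have hε0 : 0 ≤ K * q ^ k / (1 - q) := div_nonneg (by positivity) hq1'.le
      have h1 := H.Ff_sub_le (hinv (k+1)).1 hΦnice (c := (-1:ℝ)) (c' := t+1)
        (d := K * q ^ k / (1 - q))
        (fun w hw => by rw [(hinv (k+1)).1.2 w (by linarith), hΦnice.2 w (by linarith)])
        hε0 (fun v _ => hU k v) (by linarith)
      rw [← hM] at h1
      refine h1.trans ?_
      refine mul_le_mul_of_nonneg_left ?_ (mul_nonneg hM0 hε0)
      exact (ENNReal.toReal_le_toReal (measure_ne_top ν _) (measure_ne_top ν _)).2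
        (measure_mono (subset_univ _))
    refine squeeze_zero (fun k => dist_nonneg) hb1 ?_
    have h3 : Tendsto (fun k : ℕ => q ^ k) atTop (𝓝 0) :=
      tendsto_pow_atTop_nhds_zero_of_lt_one hq0 hq1
    have h4 := (((h3.const_mul K).div_const (1-q)).const_mul M).mul_const ((ν univ).toReal)
    simpa using h4
  have hΦsol : ∀ t ∈ Icc 0 b', Φ t = Ff ν s Φ t := by
    intro t ht
    rcases le_or_gt t b with h1 | h1
    · rw [hΦeq t h1, hΓ.2.1 t ⟨ht.1, h1⟩]
      exact Ff_congr hΓ.1.1 hΦnice.1 (fun w hw => (hΦeq w (hw.le.trans h1)).symm)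
    · have hmt : min t b' = t := min_eq_left ht.2
      have hseq : ∀ k : ℕ, p (k+2) t = Ff ν s (p (k+1)) t := fun k => by
        rw [show p (k+2) t = Ff ν s (p (k+1)) (min t b') from picard_succ_gt (not_le.2 h1), hmt]
      have h2 : Tendsto (fun k => p (k+2) t) atTop (𝓝 (Φ t)) :=
        (hΦ t).comp (tendsto_add_atTop_nat 1)
      have h3 : Tendsto (fun k => p (k+2) t) atTop (𝓝 (Ff ν s Φ t)) :=
        (hFfconv t).congr (fun k => (hseq k).symm)
      exact tendsto_nhds_unique h2 h3
  have hΦconst : ∀ t, b' ≤ t → Φ t = Φ b' := by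
    intro t ht
    have hseq : ∀ k : ℕ, p (k+1) t = p (k+1) b' := by
      intro k
      rw [show p (k+1) t = Ff ν s (p k) (min t b') from
          picard_succ_gt (not_le.2 (lt_of_lt_of_le hbb' ht)),
        show p (k+1) b' = Ff ν s (p k) (min b' b') from picard_succ_gt (not_le.2 hbb'),
        min_eq_right ht, min_self]
    have h2 : Tendsto (fun k => p (k+1) t) atTop (𝓝 (Φ b')) :=
      (hΦ b').congr (fun k => (hseq k).symm)
    exact tendsto_nhds_unique (hΦ t) h2
  exact ⟨Φ, hΦnice, hΦsol, hΦconst⟩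

theorem Hyp.sol_exists (H : Hyp τ m₁ m₂ L ν s) [IsFiniteMeasure ν] :
    ∃ Γ : ℝ → ℝ, Sol ν s τ Γ := by
  set S := {x : ℝ | x ∈ Icc (-1 : ℝ) τ ∧ ∃ Γ, Sol ν s x Γ} with hS
  have hzero : Sol ν s (-1) (fun _ => (0:ℝ)) :=
    ⟨⟨monotone_const, fun _ _ => rfl⟩,
      fun t ht => absurd (ht.1.trans ht.2) (by norm_num), fun _ _ => rfl⟩
  have hS1 : (-1:ℝ) ∈ S := ⟨⟨le_rfl, by linarith [H.hτ]⟩, _, hzero⟩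
  have hSne : S.Nonempty := ⟨-1, hS1⟩
  have hSbdd : BddAbove S := ⟨τ, fun x hx => hx.1.2⟩
  set c := sSup S with hc
  have hcle : c ≤ τ := csSup_le hSne (fun x hx => hx.1.2)
  have hcge : (-1:ℝ) ≤ c := le_csSup hSbdd hS1
  set V := fun t : ℝ => {y : ℝ | ∃ x ∈ S, ∃ Γ, Sol ν s x Γ ∧ Γ t = y} with hV
  have hVne : ∀ t, (0:ℝ) ∈ V t := fun t => ⟨-1, hS1, _, hzero, rfl⟩
  have hVbdd : ∀ t, BddAbove (V t) := by
    intro t; refine ⟨(ν univ).toReal * m₁⁻¹, ?_⟩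
    rintro y ⟨x, hx, Γ, hΓ, rfl⟩; exact H.sol_bound hΓ t
  set g := fun t => sSup (V t) with hg
  have hcoh : ∀ {x x' : ℝ} {Γ Γ' : ℝ → ℝ}, x ≤ x' → Sol ν s x Γ → Sol ν s x' Γ' →
      ∀ t, Γ t = Γ' (min t x) := by
    intro x x' Γ Γ' hxx' hΓ hΓ'
    have he := H.sol_unique hΓ (H.sol_restrict hxx' hΓ')
    intro t; rw [he]
  have hglec : ∀ {x : ℝ} {Γ : ℝ → ℝ}, x ∈ S → Sol ν s x Γ → ∀ {t : ℝ}, t ≤ x →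
      g t = Γ t := by
    intro x Γ hx hΓ t ht
    refine le_antisymm (csSup_le ⟨0, hVne t⟩ ?_) (le_csSup (hVbdd t) ⟨x, hx, Γ, hΓ, rfl⟩)
    rintro y ⟨x', hx', Γ', hΓ', rfl⟩
    rcases le_total x' x with hle | hle
    · rw [hcoh hle hΓ' hΓ t]
      exact hΓ.1.1 (min_le_left t x')
    · rw [hcoh hle hΓ hΓ' t, min_eq_left ht]
  have hgmono : Monotone g := by
    intro t₁ t₂ hle
    refine csSup_le ⟨0, hVne t₁⟩ ?_
    rintro y ⟨x, hx, Γ, hΓ, rfl⟩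
    exact le_trans (hΓ.1.1 hle) (le_csSup (hVbdd t₂) ⟨x, hx, Γ, hΓ, rfl⟩)
  have hgneg : ∀ t < (0:ℝ), g t = 0 := by
    intro t ht
    refine le_antisymm (csSup_le ⟨0, hVne t⟩ ?_) (le_csSup (hVbdd t) (hVne t))
    rintro y ⟨x, hx, Γ, hΓ, rfl⟩
    exact (hΓ.1.2 t ht).le
  have hgnice : Nice g := ⟨hgmono, hgneg⟩
  have hgeq : ∀ t, 0 ≤ t → t < c → g t = Ff ν s g t := by
    intro t ht htc
    obtain ⟨x, hxS, hx⟩ := exists_lt_of_lt_csSup hSne htc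
    obtain ⟨Γ, hΓ⟩ := hxS.2
    rw [hglec hxS hΓ hx.le, hΓ.2.1 t ⟨ht, hx.le⟩]
    exact Ff_congr hΓ.1.1 hgmono (fun w hw => (hglec hxS hΓ (hw.trans hx).le).symm)
  set h : ℝ → ℝ := fun t => if t < c then g t else Ff ν s g c with hh
  have hwc : ∀ w, w < c → h w = g w := fun w hw => if_pos hw
  have hwc' : ∀ w, ¬ w < c → h w = Ff ν s g c := fun w hw => if_neg hw
  have hmono : Monotone h := by
    intro t₁ t₂ hle
    by_cases h2 : t₂ < c
    · rw [hwc _ (lt_of_le_of_lt hle h2), hwc _ h2]; exact hgmono hle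
    · rw [hwc' _ h2]
      by_cases h1 : t₁ < c
      · rw [hwc _ h1]
        rcases lt_or_ge t₁ 0 with h0 | h0
        · rw [hgneg t₁ h0]; exact H.Ff_nonneg hgnice c
        · rw [hgeq t₁ h0 h1]; exact H.Ff_mono hgnice h1.le
      · rw [hwc' _ h1]
  have hneg : ∀ t < (0:ℝ), h t = 0 := by
    intro t ht
    by_cases h1 : t < c
    · rw [hwc _ h1]; exact hgneg t ht
    · rw [hwc' _ h1]
      push_neg at h1
      exact Ff_neg (lt_of_le_of_lt h1 ht)
  have heqn : ∀ t ∈ Icc 0 c, h t = Ff ν s h t := by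
    intro t htm
    by_cases h1 : t < c
    · rw [hwc _ h1, hgeq t htm.1 h1]
      exact Ff_congr hgmono hmono (fun w hw => (hwc w (lt_trans hw h1)).symm)
    · have ht' : t = c := le_antisymm htm.2 (not_lt.1 h1)
      rw [ht', hwc' c (lt_irrefl c)]
      exact Ff_congr hgmono hmono (fun w hw => (hwc w hw).symm)
  have hconst : ∀ t, c ≤ t → h t = h c := by
    intro t ht
    rw [hwc' t (not_lt.2 ht), hwc' c (lt_irrefl c)]
  have hcS : c ∈ S := ⟨⟨hcge, hcle⟩, h, ⟨hmono, hneg⟩, heqn, hconst⟩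
  by_cases hcτ : c = τ
  · obtain ⟨Γ, hΓ⟩ := hcS.2
    exact ⟨Γ, hcτ ▸ hΓ⟩
  · exfalso
    have hclt : c < τ := lt_of_le_of_ne hcle hcτ
    obtain ⟨Γc, hΓc⟩ := hcS.2
    obtain ⟨b', hb'1, hb'2, Φ, hΦ⟩ := H.sol_extend hΓc hclt
    have : b' ≤ c := le_csSup hSbdd ⟨⟨by linarith, hb'2⟩, Φ, hΦ⟩
    linarith

end Stmt17

open Filter Topology in
/-- Let `ν` be a finite Borel measure on `[0,τ]`, let
`0 < m₁ ≤ m₂ < ∞` and `L ≥ 0`, and let `s : [0,∞) × [0,τ] → [m₁, m₂]` be measurable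
and satisfy `|s(x,u) − s(x',u)| ≤ L|x − x'|`. Then there exists exactly one
nondecreasing right-continuous function `Γ : [0,τ] → [0,∞)` with left limits (with
`Γ(0−) := 0`) satisfying the Volterra integral equation
`Γ(t) = ∫_{[0,t]} ν(du) / s(Γ(u−), u)` for all `t ∈ [0,τ]`; moreover `Γ` is bounded,
with `Γ(τ) ≤ ν([0,τ])/m₁`. -/
theorem stmt_17 (τ m₁ m₂ L : ℝ) (hτ : 0 ≤ τ) (hm₁ : 0 < m₁) (hm : m₁ ≤ m₂) (hL : 0 ≤ L)
    (ν : Measure ℝ) [IsFiniteMeasure ν] (hν : ν (Icc 0 τ)ᶜ = 0)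
    (s : ℝ → ℝ → ℝ) (hs_meas : Measurable (Function.uncurry s))
    (hs_range : ∀ x ∈ Ici (0:ℝ), ∀ u ∈ Icc 0 τ, s x u ∈ Icc m₁ m₂)
    (hs_lip : ∀ x ∈ Ici (0:ℝ), ∀ x' ∈ Ici (0:ℝ), ∀ u ∈ Icc 0 τ,
      |s x u - s x' u| ≤ L * |x - x'|) :
    (∃ Γ : ℝ → ℝ, IsVolterraSolution τ ν s Γ ∧
      (∀ t ∈ Icc 0 τ, 0 ≤ Γ t) ∧ Γ τ ≤ (ν (Icc 0 τ)).toReal / m₁) ∧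
    ∀ Γ₁ Γ₂ : ℝ → ℝ, IsVolterraSolution τ ν s Γ₁ → IsVolterraSolution τ ν s Γ₂ →
      ∀ t ∈ Icc 0 τ, Γ₁ t = Γ₂ t := by
  have H : Stmt17.Hyp τ m₁ m₂ L ν s := ⟨hτ, hm₁, hm, hL, hν, hs_meas, hs_range, hs_lip⟩
  have hνuniv : ν univ = ν (Icc 0 τ) := by
    have h1 := measure_add_measure_compl (μ := ν)
      (measurableSet_Icc : MeasurableSet (Icc (0:ℝ) τ))
    rw [hν, add_zero] at h1
    exact h1.symm
  constructor
  · obtain ⟨Γ, hΓ⟩ := H.sol_exists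
    have heqn : ∀ t ∈ Icc 0 τ, Γ t = ∫ u in Icc 0 t, (s (Function.leftLim Γ u) u)⁻¹ ∂ν :=
      hΓ.2.1
    refine ⟨Γ, ⟨hΓ.1.1, hΓ.1.2, ?_, heqn⟩, fun t _ => hΓ.1.nonneg t, ?_⟩
    · intro t ht
      have hrc := H.Ff_rc hΓ.1 ht.1
      have hmem : Iio τ ∈ 𝓝[Ici t] t := nhdsWithin_le_nhds (Iio_mem_nhds ht.2)
      have hev : Γ =ᶠ[𝓝[Ici t] t] Stmt17.Ff ν s Γ := by
        filter_upwards [hmem, self_mem_nhdsWithin] with y hy1 hy2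
        exact hΓ.2.1 y ⟨le_trans ht.1 hy2, hy1.le⟩
      exact hrc.congr_of_eventuallyEq hev (hΓ.2.1 t ⟨ht.1, ht.2.le⟩)
    · have h2 := hΓ.2.1 τ ⟨hτ, le_rfl⟩
      have hle := H.Ff_le hΓ.1 τ
      rw [hνuniv] at hle
      calc Γ τ = Stmt17.Ff ν s Γ τ := h2
        _ ≤ (ν (Icc 0 τ)).toReal * m₁⁻¹ := hle
        _ = (ν (Icc 0 τ)).toReal / m₁ := (div_eq_mul_inv _ _).symm
  · intro Γ₁ Γ₂ h₁ h₂ t ht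
    exact H.eq_on ⟨h₁.1, h₁.2.1⟩ h₁.2.2.2 ⟨h₂.1, h₂.2.1⟩ h₂.2.2.2 t ht.2
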